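/- Let V be an n-dimensional complex vector space (n ≥ 1) and let H₀, H₁, H₂ be Hermitian norms on V such that H₀ ≤ H₂ and H₁ ≤ H₂ pointwise. Then for every p ∈ [1,∞): d_p(H₀, H₁)^p ≤ d_p(H₀, H₂)^p + d_p(H₁, H₂)^p. -/

import Mathlib

open scoped BigOperators
open Filter Classical

noncomputable section

variable {V : Type*} [AddCommGroup V] [Module ℂ V]

/-- A filtration on a complex vector space `V`: a left-continuous, decreasing family of
subspaces which equals `⊤` for `t` small enough and `⊥` for `t` large enough. -/
structure IsFiltration' (F : ℝ → Submodule ℂ V) : Prop where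
  antitone : ∀ ⦃s t : ℝ⦄, s ≤ t → F t ≤ F s
  left_cont : ∀ t : ℝ, ∃ ε > 0, ∀ δ : ℝ, 0 < δ → δ < ε → F (t - δ) = F t
  eventually_top : ∃ t₀ : ℝ, ∀ t ≤ t₀, F t = ⊤
  eventually_bot : ∃ t₁ : ℝ, ∀ t, t₁ ≤ t → F t = ⊥

/-- The weight of a vector with respect to a filtration. -/
def filtWeight (F : ℝ → Submodule ℂ V) (s : V) : ℝ :=
  sSup {l : ℝ | s ∈ F l}

/-- The non-Archimedean norm `χ_𝓕` associated with a filtration. -/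
def filtChi (F : ℝ → Submodule ℂ V) (s : V) : ℝ :=
  if s = 0 then 0 else Real.exp (-(filtWeight F s))

/-- The jumping numbers `e_𝓕(j)` of a filtration. -/
def jumpNum (F : ℝ → Submodule ℂ V) (j : ℕ) : ℝ :=
  sSup {t : ℝ | j ≤ Module.finrank ℂ (F t)}

/-- The norm associated with a Hermitian inner product. -/
def hnorm (c : InnerProductSpace.Core ℂ V) : V → ℝ :=
  fun v => Real.sqrt ((c.inner v v).re)

/-- The `j`-th element of the logarithmic relative spectrum of two norms. -/
def relSpec (N₀ N₁ : V → ℝ) (j : ℕ) : ℝ :=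
  sSup {r : ℝ | ∃ W : Submodule ℂ V, Module.finrank ℂ W = j ∧
    r = sInf {x : ℝ | ∃ w ∈ W, w ≠ 0 ∧ x = Real.log (N₁ w / N₀ w)}}

/-- The distance `d_p` between two norms, `p ∈ [1, ∞)`. -/
def dp (p : ℝ) (N₀ N₁ : V → ℝ) : ℝ :=
  ((∑ j ∈ Finset.Icc 1 (Module.finrank ℂ V), |relSpec N₀ N₁ j| ^ p) /
    (Module.finrank ℂ V : ℝ)) ^ (1 / p)

/-- The distance `d_∞` between two norms. -/
def dInf (N₀ N₁ : V → ℝ) : ℝ :=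
  sSup {r : ℝ | ∃ j ∈ Finset.Icc 1 (Module.finrank ℂ V), r = |relSpec N₀ N₁ j|}

/-- A family of vectors is orthonormal with respect to a Hermitian inner product. -/
def OrthonormalFor (c : InnerProductSpace.Core ℂ V) {ι : Type*} (s : ι → V) : Prop :=
  ∀ i j, c.inner (s i) (s j) = if i = j then 1 else 0

/-- A family of vectors is orthogonal with respect to a Hermitian inner product. -/
def OrthogonalFor (c : InnerProductSpace.Core ℂ V) {ι : Type*} (s : ι → V) : Prop :=
  ∀ i j, i ≠ j → c.inner (s i) (s j) = 0

/-- `c : ℝ → InnerProductSpace.Core ℂ V` is the geodesic ray of Hermitian norms emanating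
from `c 0` associated with the filtration `F` via the adapted orthonormal basis `s`:
`s` is orthonormal for `c 0`, `s j ∈ 𝓕^{e_𝓕(j)} V`, and for each `t ≥ 0` the rescaled basis
`(exp (t e_𝓕(i)) • s i)` is orthonormal for `c t`. -/
def IsGeodesicRayFor (F : ℝ → Submodule ℂ V) {n : ℕ} (s : Fin n → V)
    (c : ℝ → InnerProductSpace.Core ℂ V) : Prop :=
  OrthonormalFor (c 0) s ∧
  (∀ i : Fin n, s i ∈ F (jumpNum F (i.1 + 1))) ∧
  ∀ t : ℝ, 0 ≤ t → ∀ i j : Fin n,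
    (c t).inner (Real.exp (t * jumpNum F (i.1 + 1)) • s i)
      (Real.exp (t * jumpNum F (j.1 + 1)) • s j) = if i = j then 1 else 0

/-- A (complex) norm on a vector space. -/
structure IsComplexNorm (N : V → ℝ) : Prop where
  eq_zero_iff : ∀ x : V, N x = 0 ↔ x = 0
  smul : ∀ (a : ℂ) (x : V), N (a • x) = ‖a‖ * N x
  add_le : ∀ x y : V, N (x + y) ≤ N x + N y


lemma core_inner_self_real (c : InnerProductSpace.Core ℂ V) (v : V) :
    c.inner v v = ((c.inner v v).re : ℂ) := by
  have h := c.conj_inner_symm v v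
  have him : (c.inner v v).im = 0 := by
    have := congrArg Complex.im h
    simp at this
    linarith
  exact Complex.ext (by simp) him

lemma hnorm_pos (c : InnerProductSpace.Core ℂ V) {v : V} (hv : v ≠ 0) :
    0 < hnorm c v := by
  have hre : 0 ≤ (c.inner v v).re := c.re_inner_nonneg v
  have hne : (c.inner v v).re ≠ 0 := by
    intro h0
    apply hv
    apply c.definite
    rw [core_inner_self_real c v, h0]
    simp
  exact Real.sqrt_pos.mpr (lt_of_le_of_ne hre (Ne.symm hne))

lemma hnorm_nonneg (c : InnerProductSpace.Core ℂ V) (v : V) : 0 ≤ hnorm c v :=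
  Real.sqrt_nonneg _

lemma hnorm_sq (c : InnerProductSpace.Core ℂ V) (v : V) :
    hnorm c v ^ 2 = (c.inner v v).re := Real.sq_sqrt (c.re_inner_nonneg v)

lemma core_inner_add_right (c : InnerProductSpace.Core ℂ V) (x y z : V) :
    c.inner x (y + z) = c.inner x y + c.inner x z := by
  rw [← c.conj_inner_symm, c.add_left, map_add, c.conj_inner_symm, c.conj_inner_symm]

lemma core_inner_smul_right (c : InnerProductSpace.Core ℂ V) (x y : V) (r : ℂ) :
    c.inner x (r • y) = r * c.inner x y := by
  rw [← c.conj_inner_symm, c.smul_left, map_mul, c.conj_inner_symm]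
  simp

lemma core_inner_zero_right (c : InnerProductSpace.Core ℂ V) (x : V) :
    c.inner x 0 = 0 := by
  have := core_inner_smul_right c x 0 0
  simpa using this

lemma core_inner_sum_left (c : InnerProductSpace.Core ℂ V) {ι : Type*} (s : Finset ι)
    (f : ι → V) (v : V) :
    c.inner (∑ i ∈ s, f i) v = ∑ i ∈ s, c.inner (f i) v := by
  classical
  induction s using Finset.induction with
  | empty =>
      simp
      have := c.add_left 0 0 v
      simpa using this.symm
  | insert _ _ hx ih =>
      rw [Finset.sum_insert hx, c.add_left, ih, Finset.sum_insert hx]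

end

noncomputable section

open Module Submodule

lemma exists_diag {V : Type*} [AddCommGroup V] [Module ℂ V] [FiniteDimensional ℂ V]
    {n : ℕ} (hdim : Module.finrank ℂ V = n)
    (c₁ c₂ : InnerProductSpace.Core ℂ V) :
    ∃ (e : Fin n → V) (μ : Fin n → ℝ) (a : V → Fin n → ℂ),
      Monotone μ ∧ (∀ i, 0 < μ i) ∧
      (∀ s : Finset (Fin n), Module.finrank ℂ (span ℂ (e '' ↑s)) = s.card) ∧
      (∀ (s : Finset (Fin n)) (v : V), v ∈ span ℂ (e '' ↑s) → ∀ i ∉ s, a v i = 0) ∧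
      (∀ v : V, (hnorm c₁ v)^2 = ∑ i, ‖a v i‖^2) ∧
      (∀ v : V, (hnorm c₂ v)^2 = ∑ i, μ i * ‖a v i‖^2) := by
  classical
  letI : NormedAddCommGroup V := c₁.toNormedAddCommGroup
  letI : InnerProductSpace ℂ V := InnerProductSpace.ofCore c₁.toCore
  have hinner1 : ∀ u v : V, (inner ℂ u v : ℂ) = c₁.inner u v := fun _ _ => rfl
  have hnorm1 : ∀ v : V, hnorm c₁ v = ‖v‖ := fun v => rfl
  -- an orthonormal basis for c₁
  let b : OrthonormalBasis (Fin n) ℂ V := (stdOrthonormalBasis ℂ V).reindex (finCongr hdim)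
  -- the operator representing c₂ against c₁
  let T : V →ₗ[ℂ] V :=
    { toFun := fun v => ∑ i, c₂.inner (b i) v • b i
      map_add' := fun x y => by
        simp_rw [core_inner_add_right, add_smul, Finset.sum_add_distrib]
      map_smul' := fun r x => by
        simp_rw [core_inner_smul_right, RingHom.id_apply, Finset.smul_sum, smul_smul] }
  have hkey : ∀ u v : V, (inner ℂ u (T v) : ℂ) = c₂.inner u v := by
    intro u v
    have hu : u = ∑ j, b.repr u j • b j := (b.sum_repr u).symm
    have hTv : T v = ∑ i, c₂.inner (b i) v • b i := rfl
    rw [hTv, inner_sum]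
    simp_rw [inner_smul_right]
    have hib : ∀ i : Fin n, (inner ℂ u (b i) : ℂ) = (starRingEnd ℂ) (inner ℂ (b i) u : ℂ) :=
      fun i => (inner_conj_symm u (b i)).symm
    conv_rhs => rw [show u = ∑ j, b.repr u j • b j from (b.sum_repr u).symm]
    rw [core_inner_sum_left]
    simp_rw [c₂.smul_left, hib, b.repr_apply_apply]
    exact Finset.sum_congr rfl fun i _ => mul_comm _ _
  have hsymm : T.IsSymmetric := by
    intro x y
    calc (inner ℂ (T x) y : ℂ) = (starRingEnd ℂ) (inner ℂ y (T x) : ℂ) :=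
          (inner_conj_symm (T x) y).symm
    _ = (starRingEnd ℂ) (c₂.inner y x) := by rw [hkey]
    _ = c₂.inner x y := c₂.conj_inner_symm x y
    _ = inner ℂ x (T y) := (hkey x y).symm
  let e' := hsymm.eigenvectorBasis hdim
  let lam := hsymm.eigenvalues hdim
  have happly : ∀ i, T (e' i) = (lam i : ℂ) • e' i :=
    fun i => hsymm.apply_eigenvectorBasis hdim i
  have hlam : ∀ i, (hnorm c₂ (e' i))^2 = lam i := by
    intro i
    rw [hnorm_sq, ← hkey, happly, inner_smul_right]
    have h1 : (inner ℂ (e' i) (e' i) : ℂ) = 1 := by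
      rw [inner_self_eq_norm_sq_to_K (𝕜 := ℂ), e'.orthonormal.1 i]
      norm_num
    rw [h1]
    simp
  have hlampos : ∀ i, 0 < lam i := by
    intro i
    rw [← hlam i]
    have hne : e' i ≠ 0 := e'.toBasis.ne_zero i
    exact pow_pos (hnorm_pos c₂ hne) 2
  -- sort the eigenvalues
  let σ := Tuple.sort lam
  let eb := e'.reindex σ.symm
  let μ := lam ∘ σ
  have hmono : Monotone μ := Tuple.monotone_sort lam
  have hebi : ∀ i, eb i = e' (σ i) := fun i => by
    rw [OrthonormalBasis.reindex_apply]; simp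
  have happly2 : ∀ i, T (eb i) = (μ i : ℂ) • eb i := fun i => by
    rw [hebi]; exact happly (σ i)
  let a : V → Fin n → ℂ := fun v i => eb.repr v i
  have hrepr : ∀ (v : V) (i : Fin n), a v i = inner ℂ (eb i) v :=
    fun v i => eb.repr_apply_apply v i
  have claim5 : ∀ v : V, hnorm c₁ v ^ 2 = ∑ i, ‖a v i‖ ^ 2 := by
    intro v
    rw [hnorm1, ← eb.repr.norm_map v, EuclideanSpace.norm_eq,
      Real.sq_sqrt (Finset.sum_nonneg fun i _ => sq_nonneg _)]
  have hreprT : ∀ (v : V) (i : Fin n), eb.repr (T v) i = (μ i : ℂ) * a v i := by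
    intro v i
    rw [eb.repr_apply_apply, ← hsymm (eb i) v, happly2, inner_smul_left, hrepr]
    simp
  have claim6 : ∀ v : V, hnorm c₂ v ^ 2 = ∑ i, μ i * ‖a v i‖ ^ 2 := by
    intro v
    rw [hnorm_sq, ← hkey v v, ← eb.repr.inner_map_map v (T v)]
    have : (inner ℂ (eb.repr v) (eb.repr (T v)) : ℂ)
        = ∑ i, (starRingEnd ℂ) (a v i) * ((μ i : ℂ) * a v i) := by
      rw [PiLp.inner_apply]
      exact Finset.sum_congr rfl fun i _ => by rw [hreprT, RCLike.inner_apply']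
    rw [this, Complex.re_sum]
    refine Finset.sum_congr rfl fun i _ => ?_
    have h1 : (starRingEnd ℂ) (a v i) * ((μ i : ℂ) * a v i)
        = ((μ i : ℂ)) * (a v i * (starRingEnd ℂ) (a v i)) := by ring
    rw [h1, Complex.mul_conj]
    have h2 : Complex.normSq (a v i) = ‖a v i‖ ^ 2 := by
      rw [Complex.normSq_eq_norm_sq]
    rw [h2, ← Complex.ofReal_mul, Complex.ofReal_re]
  have hli : LinearIndependent ℂ (fun i : Fin n => eb i) := eb.orthonormal.linearIndependent
  have claim3 : ∀ s : Finset (Fin n),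
      finrank ℂ (span ℂ ((fun i => eb i) '' ↑s)) = s.card := by
    intro s
    rw [Set.image_eq_range]
    have h := finrank_span_eq_card (R := ℂ)
      (hli.comp (Subtype.val : {x // x ∈ (↑s : Set (Fin n))} → Fin n) Subtype.val_injective)
    exact h.trans (by simp)
  have claim4 : ∀ (s : Finset (Fin n)) (v : V), v ∈ span ℂ ((fun i => eb i) '' ↑s) →
      ∀ i ∉ s, a v i = 0 := by
    intro s v hv i his
    have himg : (fun i => eb i) '' ↑s = ⇑eb.toBasis '' ↑s := by rw [eb.coe_toBasis]
    rw [himg] at hv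
    have hsupp := (eb.toBasis.mem_span_image).mp hv
    have : eb.toBasis.repr v i = 0 := by
      by_contra h
      exact his (hsupp (Finsupp.mem_support_iff.mpr h))
    have h2 : eb.repr v i = 0 := by
      rw [← eb.coe_toBasis_repr_apply]; exact this
    exact h2
  exact ⟨fun i => eb i, μ, a, hmono, fun i => hlampos (σ i), claim3, claim4, claim5, claim6⟩

noncomputable section
open Module Submodule

variable {V : Type*} [AddCommGroup V] [Module ℂ V]


def SW (c c' : InnerProductSpace.Core ℂ V) (W : Submodule ℂ V) : Set ℝ :=
  {x : ℝ | ∃ w ∈ W, w ≠ 0 ∧ x = Real.log (hnorm c' w / hnorm c w)}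

def RS (c c' : InnerProductSpace.Core ℂ V) (j : ℕ) : Set ℝ :=
  {r : ℝ | ∃ W : Submodule ℂ V, Module.finrank ℂ W = j ∧ r = sInf (SW c c' W)}

lemma relSpec_eq (c c' : InnerProductSpace.Core ℂ V) (j : ℕ) :
    relSpec (hnorm c) (hnorm c') j = sSup (RS c c' j) := rfl

lemma sq_le_sqrt_mul {x y t : ℝ} (hx : 0 ≤ x) (hy : 0 ≤ y) (ht : 0 ≤ t)
    (h : x ^ 2 ≤ t * y ^ 2) : x ≤ Real.sqrt t * y := by
  have := Real.sqrt_le_sqrt h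
  rwa [Real.sqrt_sq hx, Real.sqrt_mul ht, Real.sqrt_sq hy] at this

lemma sqrt_mul_le_of_sq {x y t : ℝ} (hx : 0 ≤ x) (hy : 0 ≤ y) (ht : 0 ≤ t)
    (h : t * y ^ 2 ≤ x ^ 2) : Real.sqrt t * y ≤ x := by
  have := Real.sqrt_le_sqrt h
  rwa [Real.sqrt_sq hx, Real.sqrt_mul ht, Real.sqrt_sq hy] at this

lemma hnorm_equiv {V : Type*} [AddCommGroup V] [Module ℂ V] [FiniteDimensional ℂ V]
    {n : ℕ} (hn : 0 < n) (hdim : Module.finrank ℂ V = n)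
    (c c' : InnerProductSpace.Core ℂ V) :
    ∃ m M : ℝ, 0 < m ∧ ∀ v : V, v ≠ 0 →
      m * hnorm c v ≤ hnorm c' v ∧ hnorm c' v ≤ M * hnorm c v := by
  obtain ⟨e, μ, a, hmono, hpos, _, _, h5, h6⟩ := exists_diag hdim c c'
  set i0 : Fin n := ⟨0, hn⟩
  set iN : Fin n := ⟨n - 1, by omega⟩
  refine ⟨Real.sqrt (μ i0), Real.sqrt (μ iN), Real.sqrt_pos.mpr (hpos i0), fun v hv => ?_⟩
  have h1 : μ i0 * hnorm c v ^ 2 ≤ hnorm c' v ^ 2 := by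
    rw [h6, h5, Finset.mul_sum]
    exact Finset.sum_le_sum fun i _ =>
      mul_le_mul_of_nonneg_right (hmono (Fin.le_def.mpr (Nat.zero_le _))) (sq_nonneg _)
  have h2 : hnorm c' v ^ 2 ≤ μ iN * hnorm c v ^ 2 := by
    rw [h6, h5, Finset.mul_sum]
    exact Finset.sum_le_sum fun i _ =>
      mul_le_mul_of_nonneg_right
        (hmono (Fin.le_def.mpr (by have := i.isLt; simp only [iN]; omega))) (sq_nonneg _)
  exact ⟨sqrt_mul_le_of_sq (hnorm_nonneg c' v) (hnorm_nonneg c v) (hpos i0).le h1,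
    sq_le_sqrt_mul (hnorm_nonneg c' v) (hnorm_nonneg c v) (hpos iN).le h2⟩

lemma SW_bounds {V : Type*} [AddCommGroup V] [Module ℂ V] [FiniteDimensional ℂ V]
    {n : ℕ} (hn : 0 < n) (hdim : Module.finrank ℂ V = n)
    (c c' : InnerProductSpace.Core ℂ V) :
    ∃ lo hi : ℝ, ∀ W : Submodule ℂ V, ∀ x ∈ SW c c' W, lo ≤ x ∧ x ≤ hi := by
  obtain ⟨m, M, hm, hb⟩ := hnorm_equiv hn hdim c c'
  refine ⟨Real.log m, Real.log M, fun W x hx => ?_⟩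
  obtain ⟨w, hw, hw0, rfl⟩ := hx
  have hcw : 0 < hnorm c w := hnorm_pos c hw0
  have hcw' : 0 < hnorm c' w := hnorm_pos c' hw0
  obtain ⟨hb1, hb2⟩ := hb w hw0
  constructor
  · exact Real.log_le_log hm ((le_div_iff₀ hcw).mpr hb1)
  · exact Real.log_le_log (div_pos hcw' hcw) ((div_le_iff₀ hcw).mpr hb2)

lemma SW_nonempty (c c' : InnerProductSpace.Core ℂ V) {W : Submodule ℂ V} (hW : W ≠ ⊥) :
    (SW c c' W).Nonempty := by
  obtain ⟨w, hw, hw0⟩ := Submodule.exists_mem_ne_zero_of_ne_bot hW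
  exact ⟨_, w, hw, hw0, rfl⟩

lemma ne_bot_of_finrank {W : Submodule ℂ V} {j : ℕ} (hj : 1 ≤ j)
    (hW : Module.finrank ℂ W = j) : W ≠ ⊥ := by
  intro h
  rw [h, finrank_bot] at hW
  omega

lemma RS_nonempty {V : Type*} [AddCommGroup V] [Module ℂ V] [FiniteDimensional ℂ V]
    {n : ℕ} (hn : 0 < n) (hdim : Module.finrank ℂ V = n)
    (c c' : InnerProductSpace.Core ℂ V) {j : ℕ} (hjn : j ≤ n) :
    (RS c c' j).Nonempty := by
  obtain ⟨e, μ, a, _, _, h3, _, _, _⟩ := exists_diag hdim c c'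
  obtain ⟨s, _, hcard⟩ := Finset.exists_subset_card_eq (s := (Finset.univ : Finset (Fin n)))
    (n := j) (by simpa using hjn)
  exact ⟨_, Submodule.span ℂ (e '' ↑s), by rw [h3 s, hcard], rfl⟩

lemma bddAbove_RS {V : Type*} [AddCommGroup V] [Module ℂ V] [FiniteDimensional ℂ V]
    {n : ℕ} (hn : 0 < n) (hdim : Module.finrank ℂ V = n)
    (c c' : InnerProductSpace.Core ℂ V) {j : ℕ} (hj : 1 ≤ j) :
    BddAbove (RS c c' j) := by
  obtain ⟨lo, hi, hb⟩ := SW_bounds hn hdim c c'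
  refine ⟨hi, fun r hr => ?_⟩
  obtain ⟨W, hW, rfl⟩ := hr
  have hWb : W ≠ ⊥ := ne_bot_of_finrank hj hW
  obtain ⟨x, hx⟩ := SW_nonempty c c' hWb
  exact le_trans (csInf_le ⟨lo, fun y hy => (hb W y hy).1⟩ hx) (hb W x hx).2

lemma relSpec_nonneg {V : Type*} [AddCommGroup V] [Module ℂ V] [FiniteDimensional ℂ V]
    {n : ℕ} (hn : 0 < n) (hdim : Module.finrank ℂ V = n)
    (c c' : InnerProductSpace.Core ℂ V) (hle : ∀ v, hnorm c v ≤ hnorm c' v)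
    {j : ℕ} (hj : 1 ≤ j) (hjn : j ≤ n) :
    0 ≤ relSpec (hnorm c) (hnorm c') j := by
  rw [relSpec_eq]
  obtain ⟨r, hr⟩ := RS_nonempty hn hdim c c' hjn
  refine le_trans ?_ (le_csSup (bddAbove_RS hn hdim c c' hj) hr)
  obtain ⟨W, hW, rfl⟩ := hr
  have hWb : W ≠ ⊥ := ne_bot_of_finrank hj hW
  refine le_csInf (SW_nonempty c c' hWb) fun x hx => ?_
  obtain ⟨w, hw, hw0, rfl⟩ := hx
  exact Real.log_nonneg ((one_le_div (hnorm_pos c hw0)).mpr (hle w))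

lemma relSpec_mono {V : Type*} [AddCommGroup V] [Module ℂ V] [FiniteDimensional ℂ V]
    {n : ℕ} (hn : 0 < n) (hdim : Module.finrank ℂ V = n)
    (c₀ c₁ c₂ : InnerProductSpace.Core ℂ V) (h12 : ∀ v, hnorm c₁ v ≤ hnorm c₂ v)
    {j : ℕ} (hj : 1 ≤ j) (hjn : j ≤ n) :
    relSpec (hnorm c₀) (hnorm c₁) j ≤ relSpec (hnorm c₀) (hnorm c₂) j := by
  rw [relSpec_eq, relSpec_eq]
  obtain ⟨lo, hi, hb⟩ := SW_bounds hn hdim c₀ c₁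
  refine csSup_le (RS_nonempty hn hdim c₀ c₁ hjn) fun r hr => ?_
  obtain ⟨W, hW, rfl⟩ := hr
  have hWb : W ≠ ⊥ := ne_bot_of_finrank hj hW
  refine le_trans ?_ (le_csSup (bddAbove_RS hn hdim c₀ c₂ hj) ⟨W, hW, rfl⟩)
  refine le_csInf (SW_nonempty c₀ c₂ hWb) fun x hx => ?_
  obtain ⟨w, hw, hw0, rfl⟩ := hx
  have h1 : Real.log (hnorm c₁ w / hnorm c₀ w) ∈ SW c₀ c₁ W := ⟨w, hw, hw0, rfl⟩
  refine le_trans (csInf_le ⟨lo, fun y hy => (hb W y hy).1⟩ h1) ?_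
  have h0 : 0 < hnorm c₀ w := hnorm_pos c₀ hw0
  have h1' : 0 < hnorm c₁ w := hnorm_pos c₁ hw0
  exact Real.log_le_log (div_pos h1' h0) (by gcongr; exact h12 w)

lemma relSpec_key {V : Type*} [AddCommGroup V] [Module ℂ V] [FiniteDimensional ℂ V]
    {n : ℕ} (hn : 0 < n) (hdim : Module.finrank ℂ V = n)
    (c₀ c₁ c₂ : InnerProductSpace.Core ℂ V) (h02 : ∀ v, hnorm c₀ v ≤ hnorm c₂ v)
    {j : ℕ} (hj : 1 ≤ j) (hjn : j ≤ n) :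
    -relSpec (hnorm c₁) (hnorm c₂) (n + 1 - j) ≤ relSpec (hnorm c₀) (hnorm c₁) j := by
  obtain ⟨e, μ, a, hmono, hpos, h3, h4, h5, h6⟩ := exists_diag hdim c₁ c₂
  set k : Fin n := ⟨j - 1, by omega⟩ with hk
  have hμpos : 0 < Real.sqrt (μ k) := Real.sqrt_pos.mpr (hpos k)
  set L : ℝ := Real.log (Real.sqrt (μ k)) with hL
  set Wlo : Submodule ℂ V := Submodule.span ℂ (e '' ↑(Finset.Iic k)) with hWlo
  set Whi : Submodule ℂ V := Submodule.span ℂ (e '' ↑(Finset.Ici k)) with hWhi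
  have hrlo : Module.finrank ℂ Wlo = j := by
    rw [hWlo, h3, Fin.card_Iic]; simp [hk]; omega
  have hrhi : Module.finrank ℂ Whi = n + 1 - j := by
    rw [hWhi, h3, Fin.card_Ici]; simp [hk]; omega
  -- norm comparison on Wlo : hnorm c₂ w ≤ √(μ k) * hnorm c₁ w
  have hlo : ∀ w ∈ Wlo, hnorm c₂ w ≤ Real.sqrt (μ k) * hnorm c₁ w := by
    intro w hw
    refine sq_le_sqrt_mul (hnorm_nonneg c₂ w) (hnorm_nonneg c₁ w) (hpos k).le ?_
    rw [h6, h5, Finset.mul_sum]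
    refine Finset.sum_le_sum fun i _ => ?_
    by_cases hcase : a w i = 0
    · simp [hcase]
    · have his : i ∈ Finset.Iic k := by
        by_contra hnot
        exact hcase (h4 _ w hw i hnot)
      exact mul_le_mul_of_nonneg_right (hmono (Finset.mem_Iic.mp his)) (sq_nonneg _)
  -- norm comparison on Whi : √(μ k) * hnorm c₁ w ≤ hnorm c₂ w
  have hhi : ∀ w ∈ Whi, Real.sqrt (μ k) * hnorm c₁ w ≤ hnorm c₂ w := by
    intro w hw
    refine sqrt_mul_le_of_sq (hnorm_nonneg c₂ w) (hnorm_nonneg c₁ w) (hpos k).le ?_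
    rw [h6, h5, Finset.mul_sum]
    refine Finset.sum_le_sum fun i _ => ?_
    by_cases hcase : a w i = 0
    · simp [hcase]
    · have his : i ∈ Finset.Ici k := by
        by_contra hnot
        exact hcase (h4 _ w hw i hnot)
      exact mul_le_mul_of_nonneg_right (hmono (Finset.mem_Ici.mp his)) (sq_nonneg _)
  have step1 : -L ≤ sInf (SW c₀ c₁ Wlo) := by
    refine le_csInf (SW_nonempty c₀ c₁ (ne_bot_of_finrank hj hrlo)) fun x hx => ?_
    obtain ⟨w, hw, hw0, rfl⟩ := hx
    have h0w : 0 < hnorm c₀ w := hnorm_pos c₀ hw0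
    have h1w : 0 < hnorm c₁ w := hnorm_pos c₁ hw0
    have h2w : 0 < hnorm c₂ w := hnorm_pos c₂ hw0
    have la : Real.log (hnorm c₀ w) ≤ Real.log (hnorm c₂ w) :=
      Real.log_le_log h0w (h02 w)
    have lb : Real.log (hnorm c₂ w) ≤ L + Real.log (hnorm c₁ w) := by
      have := Real.log_le_log h2w (hlo w hw)
      rwa [Real.log_mul hμpos.ne' h1w.ne'] at this
    rw [Real.log_div h1w.ne' h0w.ne']
    linarith
  have step2 : sInf (SW c₀ c₁ Wlo) ≤ relSpec (hnorm c₀) (hnorm c₁) j := by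
    rw [relSpec_eq]
    exact le_csSup (bddAbove_RS hn hdim c₀ c₁ hj) ⟨Wlo, hrlo, rfl⟩
  have step3 : L ≤ sInf (SW c₁ c₂ Whi) := by
    refine le_csInf (SW_nonempty c₁ c₂ (ne_bot_of_finrank (by omega) hrhi)) fun x hx => ?_
    obtain ⟨w, hw, hw0, rfl⟩ := hx
    have h1w : 0 < hnorm c₁ w := hnorm_pos c₁ hw0
    refine Real.log_le_log hμpos ?_
    rw [le_div_iff₀ h1w]
    exact hhi w hw
  have step4 : sInf (SW c₁ c₂ Whi) ≤ relSpec (hnorm c₁) (hnorm c₂) (n + 1 - j) := by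
    rw [relSpec_eq]
    exact le_csSup (bddAbove_RS hn hdim c₁ c₂ (by omega)) ⟨Whi, hrhi, rfl⟩
  linarith



/-- for Hermitian norms `H₀ ≤ H₂` and `H₁ ≤ H₂` on an `n`-dimensional complex
vector space and `p ∈ [1,∞)`, `d_p(H₀,H₁)^p ≤ d_p(H₀,H₂)^p + d_p(H₁,H₂)^p`. -/
theorem dp_pow_le_of_le
    {V : Type*} [AddCommGroup V] [Module ℂ V] [FiniteDimensional ℂ V]
    {n : ℕ} (hn : 1 ≤ n) (hdim : Module.finrank ℂ V = n)
    (c₀ c₁ c₂ : InnerProductSpace.Core ℂ V)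
    (h02 : ∀ v : V, hnorm c₀ v ≤ hnorm c₂ v) (h12 : ∀ v : V, hnorm c₁ v ≤ hnorm c₂ v)
    (p : ℝ) (hp : 1 ≤ p) :
    dp p (hnorm c₀) (hnorm c₁) ^ p ≤
      dp p (hnorm c₀) (hnorm c₂) ^ p + dp p (hnorm c₁) (hnorm c₂) ^ p := by
  have hp0 : 0 < p := lt_of_lt_of_le one_pos hp
  have hn0 : 0 < n := hn
  have key : ∀ N₀ N₁ : V → ℝ, dp p N₀ N₁ ^ p =
      (∑ j ∈ Finset.Icc 1 n, |relSpec N₀ N₁ j| ^ p) / n := by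
    intro N₀ N₁
    have hx : (0:ℝ) ≤ (∑ j ∈ Finset.Icc 1 n, |relSpec N₀ N₁ j| ^ p) / n := by
      apply div_nonneg
      · exact Finset.sum_nonneg fun j _ => Real.rpow_nonneg (abs_nonneg _) p
      · positivity
    simp only [dp, hdim]
    rw [← Real.rpow_mul hx, one_div_mul_cancel hp0.ne', Real.rpow_one]
  rw [key, key, key]
  have termwise : ∀ j ∈ Finset.Icc 1 n,
      |relSpec (hnorm c₀) (hnorm c₁) j| ^ p ≤
        |relSpec (hnorm c₀) (hnorm c₂) j| ^ p +
          |relSpec (hnorm c₁) (hnorm c₂) (n + 1 - j)| ^ p := by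
    intro j hj
    obtain ⟨hj1, hjn⟩ := Finset.mem_Icc.mp hj
    have h02nn : 0 ≤ relSpec (hnorm c₀) (hnorm c₂) j :=
      relSpec_nonneg hn0 hdim c₀ c₂ h02 hj1 hjn
    have h12nn : 0 ≤ relSpec (hnorm c₁) (hnorm c₂) (n + 1 - j) :=
      relSpec_nonneg hn0 hdim c₁ c₂ h12 (by omega) (by omega)
    have hmon : relSpec (hnorm c₀) (hnorm c₁) j ≤ relSpec (hnorm c₀) (hnorm c₂) j :=
      relSpec_mono hn0 hdim c₀ c₁ c₂ h12 hj1 hjn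
    have hkey : -relSpec (hnorm c₁) (hnorm c₂) (n + 1 - j) ≤
        relSpec (hnorm c₀) (hnorm c₁) j :=
      relSpec_key hn0 hdim c₀ c₁ c₂ h02 hj1 hjn
    set A := relSpec (hnorm c₀) (hnorm c₂) j
    set B := relSpec (hnorm c₁) (hnorm c₂) (n + 1 - j)
    have habs : |relSpec (hnorm c₀) (hnorm c₁) j| ≤ max A B := by
      rw [abs_le]
      constructor
      · calc -max A B ≤ -B := neg_le_neg (le_max_right A B)
          _ ≤ _ := hkey
      · exact hmon.trans (le_max_left A B)
    have h1 : |relSpec (hnorm c₀) (hnorm c₁) j| ^ p ≤ max A B ^ p :=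
      Real.rpow_le_rpow (abs_nonneg _) habs hp0.le
    refine h1.trans ?_
    rcases max_cases A B with ⟨heq, _⟩ | ⟨heq, _⟩ <;> rw [heq]
    · calc A ^ p = |A| ^ p := by rw [abs_of_nonneg h02nn]
        _ ≤ _ := le_add_of_nonneg_right (Real.rpow_nonneg (abs_nonneg _) p)
    · calc B ^ p = |B| ^ p := by rw [abs_of_nonneg h12nn]
        _ ≤ _ := le_add_of_nonneg_left (Real.rpow_nonneg (abs_nonneg _) p)
  have hsum : ∑ j ∈ Finset.Icc 1 n, |relSpec (hnorm c₀) (hnorm c₁) j| ^ p ≤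
      (∑ j ∈ Finset.Icc 1 n, |relSpec (hnorm c₀) (hnorm c₂) j| ^ p) +
        ∑ j ∈ Finset.Icc 1 n, |relSpec (hnorm c₁) (hnorm c₂) j| ^ p := by
    have hre : ∑ j ∈ Finset.Icc 1 n, |relSpec (hnorm c₁) (hnorm c₂) (n + 1 - j)| ^ p =
        ∑ j ∈ Finset.Icc 1 n, |relSpec (hnorm c₁) (hnorm c₂) j| ^ p := by
      refine Finset.sum_nbij' (fun j => n + 1 - j) (fun j => n + 1 - j) ?_ ?_ ?_ ?_ ?_
      · intro a ha; simp only [Finset.mem_Icc] at ha ⊢; omega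
      · intro a ha; simp only [Finset.mem_Icc] at ha ⊢; omega
      · intro a ha; simp only [Finset.mem_Icc] at ha ⊢; omega
      · intro a ha; simp only [Finset.mem_Icc] at ha ⊢; omega
      · intro a ha; rfl
    calc ∑ j ∈ Finset.Icc 1 n, |relSpec (hnorm c₀) (hnorm c₁) j| ^ p
        ≤ ∑ j ∈ Finset.Icc 1 n, (|relSpec (hnorm c₀) (hnorm c₂) j| ^ p +
            |relSpec (hnorm c₁) (hnorm c₂) (n + 1 - j)| ^ p) :=
          Finset.sum_le_sum termwise
      _ = _ := by rw [Finset.sum_add_distrib, hre]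
  have hnpos : (0:ℝ) < n := by exact_mod_cast hn0
  rw [← add_div]
  exact div_le_div_of_nonneg_right hsum hnpos.le |>.trans le_rfl
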